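/- Trace inequality for conormal spaces: for a multi-index I with |I| = k, |Z^I f(t)|²_{L²(∂Ω)} ≲ ‖∇f(t)‖_{H^k_co} ‖f(t)‖_{H^k_co} + ‖f(t)‖²_{H^k_co}. -/

import Mathlib

open MeasureTheory
open scoped ENNReal ContDiff

noncomputable section

/-- ℝ³ modelled as `Fin 3 → ℝ`. -/
abbrev E : Type := Fin 3 → ℝ

/-- The half space, the standard local model of a smooth (bounded or exterior) domain. -/
def HS : Set E := {x | 0 < x 2}

/-- Parametrization of the boundary `{z = 0}` of the half space by `ℝ²`. -/
def emb (y : Fin 2 → ℝ) : E := ![y 0, y 1, 0]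

/-- `i`-th partial derivative. -/
def pdv (i : Fin 3) (g : E → ℝ) : E → ℝ := fun x => fderiv ℝ g x (Pi.single i 1)

/-- The conormal vector fields tangent to the boundary:
`Z₁ = ∂_{y¹}`, `Z₂ = ∂_{y²}`, `Z₃ = (z/(1+z)) ∂_z`. -/
def Zc (i : Fin 3) (g : E → ℝ) : E → ℝ :=
  fun x => if i = 2 then x 2 / (1 + x 2) * pdv 2 g x else pdv i g x

/-- Iterated conormal derivative `Z^I`. -/
def ZIter : List (Fin 3) → (E → ℝ) → E → ℝ
  | [], g => g
  | i :: L, g => Zc i (ZIter L g)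

/-- Conormal Sobolev norm `‖g‖_{H^k_co} = Σ_{|I| ≤ k} ‖Z^I g‖_{L²(Ω)}`. -/
def HcoN (k : ℕ) (g : E → ℝ) : ℝ≥0∞ :=
  ∑ l ∈ Finset.range (k + 1), ∑ J : Fin l → Fin 3,
    eLpNorm (ZIter (List.ofFn J) g) 2 (volume.restrict HS)

/-- Conormal Sobolev norm of the full gradient, `‖∇g‖_{H^k_co}`. -/
def GradHcoN (k : ℕ) (g : E → ℝ) : ℝ≥0∞ := ∑ i : Fin 3, HcoN k (pdv i g)

/-! ### Part A : measurability and smoothness -/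

lemma measurable_pdv (i : Fin 3) (g : E → ℝ) : Measurable (pdv i g) := by
  unfold pdv; exact measurable_fderiv_apply_const ℝ g _

lemma Zc_two (g : E → ℝ) : Zc 2 g = fun x => x 2 / (1 + x 2) * pdv 2 g x := rfl

lemma Zc_ne (i : Fin 3) (hi : i ≠ 2) (g : E → ℝ) : Zc i g = pdv i g := by
  funext x; exact if_neg hi

lemma measurable_Zc (i : Fin 3) (g : E → ℝ) : Measurable (Zc i g) := by
  by_cases hi : i = 2
  · subst hi
    rw [Zc_two]
    exact ((measurable_pi_apply 2).div (measurable_const.add (measurable_pi_apply 2))).mul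
      (measurable_pdv 2 g)
  · rw [Zc_ne i hi]; exact measurable_pdv i g

lemma measurable_ZIter (L : List (Fin 3)) (g : E → ℝ) (hg : Measurable g) :
    Measurable (ZIter L g) := by
  induction L with
  | nil => exact hg
  | cons i L ih => exact measurable_Zc i _

lemma infty_add_one : (∞ : WithTop ℕ∞) + 1 ≤ (∞ : WithTop ℕ∞) := by simp

lemma contDiffAt_pdv {g : E → ℝ} {x : E} (hg : ContDiffAt ℝ ∞ g x) (i : Fin 3) :
    ContDiffAt ℝ ∞ (pdv i g) x := by
  have h1 : ContDiffAt ℝ ∞ (fderiv ℝ g) x := hg.fderiv_right infty_add_one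
  have h2 := (ContinuousLinearMap.apply ℝ ℝ (Pi.single i (1:ℝ))).contDiff.contDiffAt.comp x h1
  exact h2

lemma contDiff_pdv {f : E → ℝ} (hf : ContDiff ℝ ∞ f) (i : Fin 3) : ContDiff ℝ ∞ (pdv i f) := by
  rw [contDiff_iff_contDiffAt] at hf ⊢
  exact fun x => contDiffAt_pdv (hf x) i

lemma contDiffAt_proj2 (x : E) : ContDiffAt ℝ ∞ (fun x : E => x 2) x :=
  (ContinuousLinearMap.proj (R := ℝ) (φ := fun _ : Fin 3 => ℝ) 2).contDiff.contDiffAt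

lemma contDiffAt_ZIter {g : E → ℝ} (hg : ∀ x : E, -1 < x 2 → ContDiffAt ℝ ∞ g x)
    (L : List (Fin 3)) : ∀ x : E, -1 < x 2 → ContDiffAt ℝ ∞ (ZIter L g) x := by
  induction L with
  | nil => exact hg
  | cons i L ih =>
    intro x hx
    show ContDiffAt ℝ ∞ (Zc i (ZIter L g)) x
    by_cases hi : i = 2
    · subst hi
      rw [Zc_two]
      have h1z : (1 : ℝ) + x 2 ≠ 0 := by linarith
      exact (((contDiffAt_proj2 x).div (contDiffAt_const.add (contDiffAt_proj2 x)) h1z).mul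
        (contDiffAt_pdv (ih x hx) 2))
    · rw [Zc_ne i hi]
      exact contDiffAt_pdv (ih x hx) i

/-! ### Part B : the coefficient class -/

/-- bounded rational coefficients `p(z)/(1+z)^m`. -/
def Co (a : ℝ → ℝ) : Prop :=
  Measurable a ∧ ∃ m : ℕ, ∃ p : Polynomial ℝ, p.natDegree ≤ m ∧
    ∀ z : ℝ, -1 < z → a z = p.eval z / (1+z)^m

lemma contDiff_polyeval (p : Polynomial ℝ) : ContDiff ℝ ∞ fun z : ℝ => p.eval z := by
  have h : (fun z : ℝ => p.eval z)
      = fun z => ∑ i ∈ Finset.range (p.natDegree+1), p.coeff i * z ^ i :=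
    funext fun z => Polynomial.eval_eq_sum_range z
  rw [h]
  exact ContDiff.sum fun i _ => contDiff_const.mul (contDiff_id.pow i)

lemma Co.smoothAt {a : ℝ → ℝ} (ha : Co a) {z : ℝ} (hz : -1 < z) : ContDiffAt ℝ ∞ a z := by
  obtain ⟨-, m, p, hdeg, hrep⟩ := ha
  have h1z : (1 : ℝ) + z ≠ 0 := by linarith
  have hφ : ContDiffAt ℝ ∞ (fun t : ℝ => p.eval t / (1+t)^m) z :=
    (contDiff_polyeval p).contDiffAt.div
      (((contDiff_const.add contDiff_id).pow m).contDiffAt) (pow_ne_zero _ h1z)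
  refine hφ.congr_of_eventuallyEq ?_
  filter_upwards [isOpen_Ioi.mem_nhds (show z ∈ Set.Ioi (-1:ℝ) from hz)] with t ht
  exact hrep t ht

lemma Co.hasDerivAt {a : ℝ → ℝ} (ha : Co a) {z : ℝ} (hz : -1 < z) :
    HasDerivAt a (deriv a z) z :=
  (((ha.smoothAt hz).differentiableAt (by simp)).hasDerivAt)

lemma Co_const (c : ℝ) : Co (fun _ => c) := by
  refine ⟨measurable_const, 0, Polynomial.C c, by simp, fun z _ => by simp⟩

lemma Co_w : Co (fun z : ℝ => z / (1+z)) := by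
  refine ⟨(measurable_id).div (measurable_const.add measurable_id), 1, Polynomial.X, by simp,
    fun z _ => by simp⟩

lemma Co.mul {a b : ℝ → ℝ} (ha : Co a) (hb : Co b) : Co (fun z => a z * b z) := by
  obtain ⟨ma, m, p, hdeg, hrep⟩ := ha
  obtain ⟨mb, m', p', hdeg', hrep'⟩ := hb
  refine ⟨ma.mul mb, m + m', p * p', ?_, fun z hz => ?_⟩
  · exact le_trans (Polynomial.natDegree_mul_le) (Nat.add_le_add hdeg hdeg')
  · have h1z : (1 : ℝ) + z ≠ 0 := by linarith
    show a z * b z = _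
    rw [hrep z hz, hrep' z hz, Polynomial.eval_mul, pow_add]
    field_simp

lemma Co.deriv {a : ℝ → ℝ} (ha : Co a) : Co (fun z => _root_.deriv a z) := by
  obtain ⟨ma, m, p, hdeg, hrep⟩ := ha
  refine ⟨measurable_deriv a,
    m + 1, Polynomial.derivative p * (Polynomial.X + Polynomial.C 1)
      - Polynomial.C (m : ℝ) * p, ?_, fun z hz => ?_⟩
  · refine le_trans (Polynomial.natDegree_sub_le _ _) (max_le ?_ ?_)
    · refine le_trans Polynomial.natDegree_mul_le ?_
      have h1 : (Polynomial.derivative p).natDegree ≤ m := by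
        have := Polynomial.natDegree_derivative_le p
        omega
      have h2 : (Polynomial.X + Polynomial.C (1:ℝ)).natDegree = 1 :=
        Polynomial.natDegree_X_add_C 1
      omega
    · refine le_trans Polynomial.natDegree_mul_le ?_
      simp [Polynomial.natDegree_C]
      omega
  · have h1z : (1 : ℝ) + z ≠ 0 := by linarith
    show _root_.deriv a z = _
    have heq : _root_.deriv a z = _root_.deriv (fun t : ℝ => p.eval t / (1+t)^m) z := by
      apply Filter.EventuallyEq.deriv_eq
      filter_upwards [isOpen_Ioi.mem_nhds (show z ∈ Set.Ioi (-1:ℝ) from hz)] with t ht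
      exact hrep t ht
    rw [heq]
    have hp : HasDerivAt (fun t : ℝ => p.eval t) (p.derivative.eval z) z := p.hasDerivAt z
    have hd : HasDerivAt (fun t : ℝ => (1+t)^m) ((m:ℝ) * (1+z)^(m-1) * 1) z :=
      ((hasDerivAt_id z).const_add 1).pow m
    have hq : HasDerivAt (fun t : ℝ => p.eval t / (1+t)^m)
        ((p.derivative.eval z * (1+z)^m - p.eval z * ((m:ℝ) * (1+z)^(m-1) * 1)) / ((1+z)^m)^2)
        z := hp.div hd (pow_ne_zero _ h1z)
    rw [hq.deriv]
    rcases m with - | m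
    · simp only [pow_zero, Nat.zero_sub, Nat.cast_zero, zero_mul, mul_one, mul_zero, sub_zero,
        one_pow, div_one, zero_add, pow_one, Polynomial.eval_sub, Polynomial.eval_mul,
        Polynomial.eval_add, Polynomial.eval_X, Polynomial.eval_C]
      field_simp
      try ring
      try tauto
    · simp only [Nat.add_sub_cancel, Polynomial.eval_sub, Polynomial.eval_mul,
        Polynomial.eval_add, Polynomial.eval_X, Polynomial.eval_C, Nat.cast_add, Nat.cast_one]
      field_simp
      ring

lemma Co.bound {a : ℝ → ℝ} (ha : Co a) : ∃ M : ℝ, 0 ≤ M ∧ ∀ z : ℝ, 0 ≤ z → |a z| ≤ M := by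
  obtain ⟨-, m, p, hdeg, hrep⟩ := ha
  refine ⟨∑ i ∈ Finset.range (p.natDegree + 1), |p.coeff i|, Finset.sum_nonneg fun i _ => abs_nonneg _,
    fun z hz => ?_⟩
  have h1z : (0 : ℝ) < 1 + z := by linarith
  have hz1 : (1 : ℝ) ≤ 1 + z := by linarith
  have hzle : z ≤ 1 + z := by linarith
  rw [hrep z (by linarith), abs_div, abs_of_pos (pow_pos h1z m)]
  rw [div_le_iff₀ (pow_pos h1z m)]
  calc |p.eval z| = |∑ i ∈ Finset.range (p.natDegree + 1), p.coeff i * z ^ i| := by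
        rw [← Polynomial.eval_eq_sum_range]
    _ ≤ ∑ i ∈ Finset.range (p.natDegree + 1), |p.coeff i * z ^ i| :=
        Finset.abs_sum_le_sum_abs _ _
    _ ≤ ∑ i ∈ Finset.range (p.natDegree + 1), |p.coeff i| * (1+z)^m := by
        refine Finset.sum_le_sum fun i hi => ?_
        rw [abs_mul]
        refine mul_le_mul_of_nonneg_left ?_ (abs_nonneg _)
        rw [abs_of_nonneg (pow_nonneg hz _)]
        calc z ^ i ≤ (1+z) ^ i := pow_le_pow_left₀ hz hzle i
          _ ≤ (1+z) ^ m := by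
              refine pow_le_pow_right₀ hz1 ?_
              have : i ≤ p.natDegree := by
                simpa using Nat.lt_succ_iff.mp (Finset.mem_range.mp hi)
              omega
    _ = (∑ i ∈ Finset.range (p.natDegree + 1), |p.coeff i|) * (1+z)^m := by
        rw [Finset.sum_mul]

/-! ### Part C : slices -/

def sl (y : Fin 2 → ℝ) (z : ℝ) : E := ![y 0, y 1, z]

lemma sl_zero (y : Fin 2 → ℝ) : sl y 0 = emb y := rfl

lemma sl_two (y : Fin 2 → ℝ) (z : ℝ) : sl y z 2 = z := rfl

lemma sl_eq (y : Fin 2 → ℝ) (z : ℝ) : sl y z = emb y + z • (Pi.single 2 1 : E) := by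
  funext j
  fin_cases j <;>
    simp [sl, emb, Pi.single_apply]

lemma hasDerivAt_slice {g : E → ℝ} {y : Fin 2 → ℝ} {z : ℝ}
    (hg : DifferentiableAt ℝ g (sl y z)) :
    HasDerivAt (fun t => g (sl y t)) (pdv 2 g (sl y z)) z := by
  have hline : HasDerivAt (fun t : ℝ => emb y + t • (Pi.single 2 1 : E))
      (Pi.single 2 1 : E) z := by
    simpa using ((hasDerivAt_id z).smul_const (Pi.single 2 1 : E)).const_add (emb y)
  have hcomp := (hg.hasFDerivAt.comp_hasDerivAt z (by simpa [← sl_eq] using hline))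
  simpa [pdv, ← sl_eq, Function.comp_def] using hcomp

/-! ### Part D : calculus rules for `pdv` -/

lemma pdv_congr_nhds {u v : E → ℝ} {x : E} (i : Fin 3) (h : u =ᶠ[nhds x] v) :
    pdv i u x = pdv i v x := by
  unfold pdv; rw [h.fderiv_eq]

lemma pdv_sum (i : Fin 3) {N : ℕ} (v : Fin N → E → ℝ) (x : E)
    (hv : ∀ m, DifferentiableAt ℝ (v m) x) :
    pdv i (fun x => ∑ m, v m x) x = ∑ m, pdv i (v m) x := by
  unfold pdv
  rw [fderiv_fun_sum fun m _ => hv m]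
  simp

lemma pdv_coeff_mul (i : Fin 3) (a : ℝ → ℝ) (v : E → ℝ) (x : E)
    (ha : ContDiffAt ℝ ∞ a (x 2)) (hv : DifferentiableAt ℝ v x) :
    pdv i (fun x => a (x 2) * v x) x
      = _root_.deriv a (x 2) * (Pi.single i (1:ℝ) : E) 2 * v x + a (x 2) * pdv i v x := by
  have hproj : HasFDerivAt (fun x : E => x 2)
      (ContinuousLinearMap.proj (R := ℝ) (φ := fun _ : Fin 3 => ℝ) 2) x :=
    (ContinuousLinearMap.proj (R := ℝ) (φ := fun _ : Fin 3 => ℝ) 2).hasFDerivAt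
  have ha' : HasDerivAt a (_root_.deriv a (x 2)) (x 2) :=
    (ha.differentiableAt (by simp)).hasDerivAt
  have hA : HasFDerivAt (fun x : E => a (x 2))
      (_root_.deriv a (x 2) • (ContinuousLinearMap.proj (R := ℝ) (φ := fun _ : Fin 3 => ℝ) 2)) x :=
    ha'.comp_hasFDerivAt x hproj
  have hmul := hA.mul hv.hasFDerivAt
  have := hmul.fderiv
  unfold pdv
  rw [show (fun x => a (x 2) * v x) = (fun x => a (x 2)) * v from rfl, this]
  simp [ContinuousLinearMap.smul_apply, ContinuousLinearMap.proj_apply]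
  ring

lemma differentiableAt_coeff_mul {a : ℝ → ℝ} {v : E → ℝ} {x : E}
    (ha : ContDiffAt ℝ ∞ a (x 2)) (hv : DifferentiableAt ℝ v x) :
    DifferentiableAt ℝ (fun x : E => a (x 2) * v x) x := by
  have h1 : DifferentiableAt ℝ (fun x : E => a (x 2)) x :=
    (ha.differentiableAt (by simp)).comp x
      ((ContinuousLinearMap.proj (R := ℝ) (φ := fun _ : Fin 3 => ℝ) 2).differentiableAt)
  exact h1.mul hv

lemma two_le_infty : (2 : WithTop ℕ∞) ≤ (∞ : WithTop ℕ∞) :=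
  WithTop.coe_le_coe.2 (OrderTop.le_top _)

lemma one_le_infty : (1 : WithTop ℕ∞) ≤ (∞ : WithTop ℕ∞) :=
  WithTop.coe_le_coe.2 (OrderTop.le_top _)

lemma pdv_pdv_comm {g : E → ℝ} {x : E} (hg : ContDiffAt ℝ ∞ g x) (i j : Fin 3) :
    pdv i (pdv j g) x = pdv j (pdv i g) x := by
  have hdiff : DifferentiableAt ℝ (fderiv ℝ g) x :=
    (hg.fderiv_right (m := 1) (WithTop.coe_le_coe.2 (OrderTop.le_top _))).differentiableAt one_ne_zero
  have hsymm : IsSymmSndFDerivAt ℝ g x := hg.isSymmSndFDerivAt (by rw [minSmoothness_of_isRCLikeNormedField]; exact two_le_infty)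
  have key : ∀ v w : E, fderiv ℝ (fun y => fderiv ℝ g y v) x w
      = fderiv ℝ (fderiv ℝ g) x w v := by
    intro v w
    have h := ((ContinuousLinearMap.apply ℝ ℝ v).hasFDerivAt.comp x hdiff.hasFDerivAt).fderiv
    rw [show (fun y => fderiv ℝ g y v)
        = (ContinuousLinearMap.apply ℝ ℝ v) ∘ (fderiv ℝ g) from rfl, h]
    rfl
  unfold pdv
  rw [key, key, hsymm (Pi.single i 1) (Pi.single j 1)]

/-! ### Part E : representation of commutators -/

lemma region_mem_nhds {x : E} (hx : -1 < x 2) : {x' : E | -1 < x' 2} ∈ nhds x :=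
  (isOpen_lt continuous_const (continuous_apply 2)).mem_nhds hx

/-- `T f = ∑ aₘ(z) Z^{Jₘ} (∂_z f)` on the region, with bounded rational coefficients. -/
def CRep (k : ℕ) (T : (E → ℝ) → E → ℝ) : Prop :=
  ∃ (N : ℕ) (a : Fin N → ℝ → ℝ) (J : Fin N → List (Fin 3)),
    (∀ m, Co (a m)) ∧ (∀ m, (J m).length ≤ k) ∧
    ∀ f : E → ℝ, ContDiff ℝ ∞ f → ∀ x : E, -1 < x 2 →
      T f x = ∑ m, a m (x 2) * ZIter (J m) (pdv 2 f) x

lemma contDiffAt_ZIter_pdv2 {f : E → ℝ} (hf : ContDiff ℝ ∞ f) (J : List (Fin 3)) :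
    ∀ x : E, -1 < x 2 → ContDiffAt ℝ ∞ (ZIter J (pdv 2 f)) x :=
  contDiffAt_ZIter (fun x _ => (contDiff_pdv hf 2).contDiffAt) J

lemma crep_congr {k : ℕ} {T T' : (E → ℝ) → E → ℝ}
    (h : ∀ f, ContDiff ℝ ∞ f → ∀ x : E, -1 < x 2 → T f x = T' f x) (hT : CRep k T) :
    CRep k T' := by
  obtain ⟨N, a, J, hCo, hlen, hrep⟩ := hT
  exact ⟨N, a, J, hCo, hlen, fun f hf x hx => (h f hf x hx) ▸ hrep f hf x hx⟩

lemma crep_mono {k k' : ℕ} (hk : k ≤ k') {T : (E → ℝ) → E → ℝ} (hT : CRep k T) : CRep k' T := by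
  obtain ⟨N, a, J, hCo, hlen, hrep⟩ := hT
  exact ⟨N, a, J, hCo, fun m => le_trans (hlen m) hk, hrep⟩

lemma crep_add {k : ℕ} {T₁ T₂ : (E → ℝ) → E → ℝ} (h₁ : CRep k T₁) (h₂ : CRep k T₂) :
    CRep k (fun f x => T₁ f x + T₂ f x) := by
  obtain ⟨N₁, a₁, J₁, hCo₁, hlen₁, hrep₁⟩ := h₁
  obtain ⟨N₂, a₂, J₂, hCo₂, hlen₂, hrep₂⟩ := h₂
  refine ⟨N₁ + N₂, Fin.addCases a₁ a₂, Fin.addCases J₁ J₂, ?_, ?_, ?_⟩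
  · intro m
    refine Fin.addCases (fun m => ?_) (fun m => ?_) m <;> simp [hCo₁, hCo₂]
  · intro m
    refine Fin.addCases (fun m => ?_) (fun m => ?_) m <;> simp [hlen₁, hlen₂]
  · intro f hf x hx
    rw [Fin.sum_univ_add]
    simp only [Fin.addCases_left, Fin.addCases_right]
    rw [hrep₁ f hf x hx, hrep₂ f hf x hx]

lemma crep_cmul {k : ℕ} {c : ℝ → ℝ} (hc : Co c) {T : (E → ℝ) → E → ℝ} (hT : CRep k T) :
    CRep k (fun f x => c (x 2) * T f x) := by
  obtain ⟨N, a, J, hCo, hlen, hrep⟩ := hT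
  refine ⟨N, fun m z => c z * a m z, J, fun m => hc.mul (hCo m), hlen, fun f hf x hx => ?_⟩
  show c (x 2) * T f x = ∑ m, (c (x 2) * a m (x 2)) * ZIter (J m) (pdv 2 f) x
  rw [hrep f hf x hx, Finset.mul_sum]
  exact Finset.sum_congr rfl fun m _ => by ring

lemma crep_pdv_expand {N : ℕ} {a : Fin N → ℝ → ℝ} {J : Fin N → List (Fin 3)}
    (hCo : ∀ m, Co (a m))
    {T : (E → ℝ) → E → ℝ}
    (hrep : ∀ f : E → ℝ, ContDiff ℝ ∞ f → ∀ x : E, -1 < x 2 →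
      T f x = ∑ m, a m (x 2) * ZIter (J m) (pdv 2 f) x)
    (i : Fin 3) {f : E → ℝ} (hf : ContDiff ℝ ∞ f) {x : E} (hx : -1 < x 2) :
    pdv i (T f) x = ∑ m, (_root_.deriv (a m) (x 2) * (Pi.single i (1:ℝ) : E) 2
        * ZIter (J m) (pdv 2 f) x + a m (x 2) * pdv i (ZIter (J m) (pdv 2 f)) x) := by
  have hdm : ∀ m, DifferentiableAt ℝ
      (fun x' : E => a m (x' 2) * ZIter (J m) (pdv 2 f) x') x := fun m =>
    differentiableAt_coeff_mul ((hCo m).smoothAt hx)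
      (((contDiffAt_ZIter_pdv2 hf (J m)) x hx).differentiableAt (by simp))
  have heq : T f =ᶠ[nhds x] fun x' => ∑ m, a m (x' 2) * ZIter (J m) (pdv 2 f) x' := by
    filter_upwards [region_mem_nhds hx] with x' hx'
    exact hrep f hf x' hx'
  rw [pdv_congr_nhds i heq, pdv_sum i _ x hdm]
  refine Finset.sum_congr rfl fun m _ => ?_
  exact pdv_coeff_mul i (a m) _ x ((hCo m).smoothAt hx)
    (((contDiffAt_ZIter_pdv2 hf (J m)) x hx).differentiableAt (by simp))

lemma crep_pdv_ne2 {k : ℕ} {i : Fin 3} (hi : i ≠ 2) {T : (E → ℝ) → E → ℝ} (hT : CRep k T) :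
    CRep (k + 1) (fun f x => pdv i (T f) x) := by
  obtain ⟨N, a, J, hCo, hlen, hrep⟩ := hT
  refine ⟨N, a, fun m => i :: J m, hCo, fun m => by simpa using Nat.succ_le_succ (hlen m),
    fun f hf x hx => ?_⟩
  show pdv i (T f) x = ∑ m, a m (x 2) * ZIter (i :: J m) (pdv 2 f) x
  rw [crep_pdv_expand hCo hrep i hf hx]
  refine Finset.sum_congr rfl fun m _ => ?_
  rw [Pi.single_eq_of_ne (Ne.symm hi),
    show ZIter (i :: J m) (pdv 2 f) x = Zc i (ZIter (J m) (pdv 2 f)) x from rfl,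
    Zc_ne i hi]
  ring

lemma crep_w_pdv2 {k : ℕ} {T : (E → ℝ) → E → ℝ} (hT : CRep k T) :
    CRep (k + 1) (fun f x => x 2 / (1 + x 2) * pdv 2 (T f) x) := by
  obtain ⟨N, a, J, hCo, hlen, hrep⟩ := hT
  have h₁ : CRep (k+1) (fun f x => ∑ m, (x 2 / (1 + x 2) * _root_.deriv (a m) (x 2))
      * ZIter (J m) (pdv 2 f) x) :=
    ⟨N, fun m z => z / (1+z) * _root_.deriv (a m) z, J,
      fun m => Co_w.mul (hCo m).deriv, fun m => le_trans (hlen m) (Nat.le_succ k),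
      fun f hf x hx => rfl⟩
  have h₂ : CRep (k+1) (fun f x => ∑ m, a m (x 2) * ZIter (2 :: J m) (pdv 2 f) x) :=
    ⟨N, a, fun m => 2 :: J m, hCo, fun m => by simpa using Nat.succ_le_succ (hlen m),
      fun f hf x hx => rfl⟩
  refine crep_congr ?_ (crep_add h₁ h₂)
  intro f hf x hx
  rw [crep_pdv_expand hCo hrep 2 hf hx]
  rw [← Finset.sum_add_distrib, Finset.mul_sum]
  refine Finset.sum_congr rfl fun m _ => ?_
  rw [Pi.single_eq_same,
    show ZIter (2 :: J m) (pdv 2 f) x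
      = x 2 / (1 + x 2) * pdv 2 (ZIter (J m) (pdv 2 f)) x from rfl]
  ring

lemma crep_main (L : List (Fin 3)) : CRep L.length (fun f => pdv 2 (ZIter L f)) := by
  induction L with
  | nil =>
    refine ⟨1, fun _ _ => 1, fun _ => [], fun _ => Co_const 1, fun _ => by simp,
      fun f hf x hx => by simp [ZIter]⟩
  | cons i L ih =>
    by_cases hi : i = 2
    · subst hi
      have h₁ : CRep (L.length + 1) (fun f x =>
          (_root_.deriv (fun z : ℝ => z / (1+z)) (x 2)) * pdv 2 (ZIter L f) x) :=
        crep_cmul Co_w.deriv (crep_mono (Nat.le_succ _) ih)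
      have h₂ : CRep (L.length + 1)
          (fun f x => x 2 / (1 + x 2) * pdv 2 ((fun f => pdv 2 (ZIter L f)) f) x) :=
        crep_w_pdv2 ih
      refine crep_congr ?_ (crep_add h₁ h₂)
      intro f hf x hx
      show _ = pdv 2 (ZIter (2 :: L) f) x
      have hG : ContDiffAt ℝ ∞ (ZIter L f) x :=
        contDiffAt_ZIter (fun x' _ => hf.contDiffAt) L x hx
      have hZc : ZIter (2 :: L) f
          = fun x' => (fun z : ℝ => z / (1+z)) (x' 2) * pdv 2 (ZIter L f) x' := by
        show Zc 2 (ZIter L f) = _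
        rw [Zc_two]
      rw [hZc, pdv_coeff_mul 2 _ _ x (Co_w.smoothAt hx)
        ((contDiffAt_pdv hG 2).differentiableAt (by simp)), Pi.single_eq_same]
      ring
    · refine crep_congr ?_ (crep_pdv_ne2 hi ih)
      intro f hf x hx
      show pdv i (pdv 2 (ZIter L f)) x = pdv 2 (ZIter (i :: L) f) x
      have hG : ContDiffAt ℝ ∞ (ZIter L f) x :=
        contDiffAt_ZIter (fun x' _ => hf.contDiffAt) L x hx
      have hZc : ZIter (i :: L) f = pdv i (ZIter L f) := by
        show Zc i (ZIter L f) = _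
        rw [Zc_ne i hi]
      rw [hZc, pdv_pdv_comm hG i 2]

/-! ### Part F : L² bounds -/

lemma measurableSet_HS : MeasurableSet HS :=
  measurableSet_lt measurable_const (measurable_pi_apply 2)

lemma le_HcoN {k : ℕ} (g : E → ℝ) {J : List (Fin 3)} (hJ : J.length ≤ k) :
    eLpNorm (ZIter J g) 2 (volume.restrict HS) ≤ HcoN k g := by
  unfold HcoN
  have h2 : eLpNorm (ZIter J g) 2 (volume.restrict HS)
      ≤ ∑ J' : Fin J.length → Fin 3,
        eLpNorm (ZIter (List.ofFn J') g) 2 (volume.restrict HS) := by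
    have := Finset.single_le_sum
      (f := fun J' : Fin J.length → Fin 3 =>
        eLpNorm (ZIter (List.ofFn J') g) 2 (volume.restrict HS))
      (fun _ _ => zero_le) (Finset.mem_univ J.get)
    simpa [List.ofFn_get] using this
  refine le_trans h2 ?_
  exact Finset.single_le_sum
    (f := fun l => ∑ J' : Fin l → Fin 3,
      eLpNorm (ZIter (List.ofFn J') g) 2 (volume.restrict HS))
    (fun _ _ => zero_le) (Finset.mem_range.mpr (Nat.lt_succ_of_le hJ))

lemma HcoN_pdv2_le_Grad (k : ℕ) (f : E → ℝ) : HcoN k (pdv 2 f) ≤ GradHcoN k f :=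
  Finset.single_le_sum (f := fun i => HcoN k (pdv i f)) (fun _ _ => zero_le)
    (Finset.mem_univ 2)

lemma crep_bound {k : ℕ} {T : (E → ℝ) → E → ℝ} (hT : CRep k T) :
    ∃ B : ℝ≥0∞, B < ⊤ ∧ ∀ f : E → ℝ, ContDiff ℝ ∞ f →
      eLpNorm (T f) 2 (volume.restrict HS) ≤ B * HcoN k (pdv 2 f) := by
  obtain ⟨N, a, J, hCo, hlen, hrep⟩ := hT
  choose M hM0 hM using fun m => (hCo m).bound
  refine ⟨∑ m, ENNReal.ofReal (M m), ?_, ?_⟩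
  · exact ENNReal.sum_lt_top.mpr fun m _ => ENNReal.ofReal_lt_top
  · intro f hf
    set u : Fin N → E → ℝ := fun m => ZIter (J m) (pdv 2 f) with hu
    have hum : ∀ m, Measurable (u m) := fun m =>
      measurable_ZIter (J m) (pdv 2 f) (measurable_pdv 2 f)
    have hcong : T f =ᵐ[volume.restrict HS] fun x => ∑ m, a m (x 2) * u m x := by
      refine (ae_restrict_iff' measurableSet_HS).2 (Filter.Eventually.of_forall fun x hx => ?_)
      exact hrep f hf x (by have : (0:ℝ) < x 2 := hx; linarith)
    rw [eLpNorm_congr_ae hcong]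
    have hsplit : (fun x => ∑ m, a m (x 2) * u m x)
        = ∑ m, fun x => a m (x 2) * u m x := by
      funext x; simp
    rw [hsplit]
    refine le_trans (eLpNorm_sum_le (fun m _ =>
      (((hCo m).1.comp (measurable_pi_apply 2)).mul (hum m)).aestronglyMeasurable)
      (by norm_num)) ?_
    rw [Finset.sum_mul]
    refine Finset.sum_le_sum fun m _ => ?_
    have hmono : eLpNorm (fun x => a m (x 2) * u m x) 2 (volume.restrict HS)
        ≤ eLpNorm (fun x => M m * u m x) 2 (volume.restrict HS) := by
      refine eLpNorm_mono_ae ((ae_restrict_iff' measurableSet_HS).2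
        (Filter.Eventually.of_forall fun x hx => ?_))
      have hx2 : (0:ℝ) ≤ x 2 := le_of_lt hx
      rw [norm_mul, norm_mul]
      refine mul_le_mul_of_nonneg_right ?_ (norm_nonneg _)
      rw [Real.norm_eq_abs, Real.norm_eq_abs, abs_of_nonneg (hM0 m)]
      exact hM m (x 2) hx2
    refine le_trans hmono ?_
    have hsmul : (fun x => M m * u m x) = (M m) • (u m) := rfl
    rw [hsmul, eLpNorm_const_smul]
    have hnn : ‖M m‖ₑ = ENNReal.ofReal (M m) := by
      rw [← ofReal_norm_eq_enorm, Real.norm_eq_abs, abs_of_nonneg (hM0 m)]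
    rw [hnn]
    exact mul_le_mul_right (le_HcoN (pdv 2 f) (hlen m)) _

/-! ### Part G : one-dimensional trace lemma -/

open Filter in
lemma oneD {h h' : ℝ → ℝ} (hd : ∀ z : ℝ, 0 ≤ z → HasDerivAt h (h' z) z)
    (hm : Measurable h') :
    ENNReal.ofReal (h 0 ^ 2)
      ≤ ∫⁻ z in Set.Ioi (0:ℝ),
          ENNReal.ofReal (Real.exp (-z) * (h z ^ 2 + 2 * |h z * h' z|)) := by
  set G : ℝ → ℝ := fun z => Real.exp (-z) * (h z ^ 2 + 2 * |h z * h' z|) with hGdef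
  set M := ∫⁻ z in Set.Ioi (0:ℝ), ENNReal.ofReal (G z) with hMdef
  by_cases hMtop : M = ⊤
  · exact hMtop ▸ le_top
  set F : ℝ → ℝ := fun z => Real.exp (-z) * h z ^ 2 with hFdef
  set F' : ℝ → ℝ := fun z => Real.exp (-z) * (2 * h z * h' z - h z ^ 2) with hF'def
  have hFd : ∀ z : ℝ, 0 ≤ z → HasDerivAt F (F' z) z := by
    intro z hz
    have he : HasDerivAt (fun t : ℝ => Real.exp (-t)) (-Real.exp (-z)) z := by
      simpa using ((hasDerivAt_id z).neg.exp)
    have hh2 : HasDerivAt (fun t => h t ^ 2) (2 * h z * h' z) z := by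
      have h2' := (hd z hz).pow 2
      have heq : ((2:ℕ):ℝ) * h z ^ (2-1) * h' z = 2 * h z * h' z := by norm_num
      rwa [heq] at h2'
    have := he.mul hh2
    refine HasDerivAt.congr_deriv this ?_
    show _ = Real.exp (-z) * (2 * h z * h' z - h z ^ 2)
    ring
  have hhc : ContinuousOn h (Set.Ici 0) := fun z hz =>
    ((hd z hz).continuousAt).continuousWithinAt
  have hhm : AEMeasurable h (volume.restrict (Set.Ioi (0:ℝ))) :=
    (hhc.mono Set.Ioi_subset_Ici_self).aemeasurable measurableSet_Ioi
  have hexpm : AEMeasurable (fun z : ℝ => Real.exp (-z))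
      (volume.restrict (Set.Ioi (0:ℝ))) :=
    (Real.measurable_exp.comp measurable_neg).aemeasurable
  have hF'm : AEMeasurable F' (volume.restrict (Set.Ioi (0:ℝ))) :=
    hexpm.mul (((aemeasurable_const.mul hhm).mul hm.aemeasurable).sub (hhm.pow aemeasurable_const))
  have hFm : AEMeasurable F (volume.restrict (Set.Ioi (0:ℝ))) :=
    hexpm.mul (hhm.pow aemeasurable_const)
  have hF'G : ∀ z, |F' z| ≤ G z := by
    intro z
    have h1 : |2 * h z * h' z - h z ^ 2| ≤ h z ^ 2 + 2 * |h z * h' z| := by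
      calc |2 * h z * h' z - h z ^ 2| ≤ |2 * h z * h' z| + |h z ^ 2| := abs_sub _ _
        _ = 2 * |h z * h' z| + h z ^ 2 := by
            rw [abs_of_nonneg (sq_nonneg (h z)), mul_assoc, abs_mul, abs_two]
        _ = h z ^ 2 + 2 * |h z * h' z| := by ring
    show |Real.exp (-z) * (2 * h z * h' z - h z ^ 2)|
        ≤ Real.exp (-z) * (h z ^ 2 + 2 * |h z * h' z|)
    rw [abs_mul, abs_of_pos (Real.exp_pos (-z))]
    exact mul_le_mul_of_nonneg_left h1 (Real.exp_pos (-z)).le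
  have hFG : ∀ z, |F z| ≤ G z := by
    intro z
    rw [hFdef, hGdef, abs_of_nonneg (by positivity)]
    refine mul_le_mul_of_nonneg_left ?_ (Real.exp_pos (-z)).le
    simp [abs_nonneg]
    positivity
  have hFnonneg : ∀ z, 0 ≤ F z := fun z => by positivity
  have hMle : ∀ (W : ℝ → ℝ), AEMeasurable W (volume.restrict (Set.Ioi (0:ℝ))) →
      (∀ z, |W z| ≤ G z) → IntegrableOn W (Set.Ioi (0:ℝ)) := by
    intro W hWm hWG
    refine ⟨hWm.aestronglyMeasurable, ?_⟩
    refine lt_of_le_of_lt (?_ : _ ≤ M) (lt_of_le_of_ne le_top hMtop)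
    rw [hMdef]
    refine lintegral_mono fun z => ?_
    rw [← ofReal_norm_eq_enorm, Real.norm_eq_abs]
    exact ENNReal.ofReal_le_ofReal (hWG z)
  have hintF' : IntegrableOn F' (Set.Ioi (0:ℝ)) := hMle F' hF'm hF'G
  have hintF : IntegrableOn F (Set.Ioi (0:ℝ)) := hMle F hFm hFG
  have hFTC : ∀ b : ℝ, 0 ≤ b → ∫ z in (0:ℝ)..b, F' z = F b - F 0 := by
    intro b hb
    refine intervalIntegral.integral_eq_sub_of_hasDerivAt (fun z hz => hFd z ?_) ?_
    · rw [Set.uIcc_of_le hb] at hz; exact hz.1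
    · exact (intervalIntegrable_iff_integrableOn_Ioc_of_le hb).2
        (hintF'.mono_set Set.Ioc_subset_Ioi_self)
  have hlim1 : Tendsto (fun b => ∫ z in (0:ℝ)..b, F' z) atTop
      (nhds (∫ z in Set.Ioi (0:ℝ), F' z)) :=
    intervalIntegral_tendsto_integral_Ioi 0 hintF' tendsto_id
  set I := ∫ z in Set.Ioi (0:ℝ), F' z with hIdef
  have hlimF : Tendsto F atTop (nhds (F 0 + I)) := by
    have h2 := hlim1.const_add (F 0)
    refine h2.congr' ?_
    filter_upwards [eventually_ge_atTop (0:ℝ)] with b hb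
    rw [hFTC b hb]; ring
  have hL0 : F 0 + I = 0 := by
    by_contra hne
    have hL_nonneg : 0 ≤ F 0 + I := ge_of_tendsto' hlimF hFnonneg |>.trans_eq rfl
    have hLpos : 0 < F 0 + I := lt_of_le_of_ne hL_nonneg (Ne.symm hne)
    have hev : ∀ᶠ b in atTop, (F 0 + I) / 2 < F b :=
      hlimF.eventually (eventually_gt_nhds (half_lt_self hLpos))
    obtain ⟨a0, ha0⟩ := eventually_atTop.mp hev
    set a1 := max a0 0 with ha1
    have hsub : IntegrableOn F (Set.Ioi a1) :=
      hintF.mono_set (Set.Ioi_subset_Ioi (le_max_right a0 0))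
    have hlow : ∫⁻ z in Set.Ioi a1, ENNReal.ofReal ((F 0 + I)/2)
        ≤ ∫⁻ z in Set.Ioi a1, ‖F z‖ₑ := by
      refine lintegral_mono_ae ((ae_restrict_iff' measurableSet_Ioi).2
        (Filter.Eventually.of_forall fun z hz => ?_))
      refine le_trans (ENNReal.ofReal_le_ofReal
        (le_of_lt (ha0 z (le_trans (le_max_left a0 0) (le_of_lt hz))))) ?_
      exact Real.ofReal_le_enorm (F z)
    rw [setLIntegral_const] at hlow
    rw [Real.volume_Ioi, ENNReal.mul_top (by
      simp only [ne_eq, ENNReal.ofReal_eq_zero, not_le]; linarith)] at hlow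
    exact lt_irrefl ⊤ (lt_of_le_of_lt hlow hsub.2)
  have hF0eq : F 0 = -I := by linarith
  have habs : F 0 ≤ |I| := hF0eq ▸ neg_le_abs I
  have hIbound : |I| ≤ M.toReal := by
    have h1 : |I| ≤ ∫ z in Set.Ioi (0:ℝ), |F' z| := by
      simpa [Real.norm_eq_abs] using
        norm_integral_le_integral_norm (f := F') (μ := volume.restrict (Set.Ioi (0:ℝ)))
    have h2 : ∫ z in Set.Ioi (0:ℝ), |F' z|
        = (∫⁻ z in Set.Ioi (0:ℝ), ‖F' z‖ₑ).toReal := by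
      simpa [Real.norm_eq_abs] using
        integral_norm_eq_lintegral_enorm hF'm.aestronglyMeasurable
    have h3 : (∫⁻ z in Set.Ioi (0:ℝ), ‖F' z‖ₑ) ≤ M := by
      rw [hMdef]
      refine lintegral_mono fun z => ?_
      rw [← ofReal_norm_eq_enorm, Real.norm_eq_abs]
      exact ENNReal.ofReal_le_ofReal (hF'G z)
    calc |I| ≤ ∫ z in Set.Ioi (0:ℝ), |F' z| := h1
      _ = (∫⁻ z in Set.Ioi (0:ℝ), ‖F' z‖ₑ).toReal := h2
      _ ≤ M.toReal := ENNReal.toReal_mono hMtop h3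
  have hfinal : h 0 ^ 2 ≤ M.toReal := by
    have hF00 : F 0 = h 0 ^ 2 := by rw [hFdef]; simp
    linarith
  calc ENNReal.ofReal (h 0 ^ 2) ≤ ENNReal.ofReal (M.toReal) :=
        ENNReal.ofReal_le_ofReal hfinal
    _ = M := ENNReal.ofReal_toReal hMtop

/-! ### Part H : splitting the half-space integral, and eLpNorm identities -/

lemma insertNth_eq_sl (y : Fin 2 → ℝ) (z : ℝ) : Fin.insertNth 2 z y = sl y z := by
  funext j
  fin_cases j <;>
    simp [Fin.insertNth, sl, Fin.succAboveCases, Fin.lastCases, Fin.cases,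
      Fin.castPred_zero, Fin.castPred_one]

lemma lintegral_HS_eq (Φ : E → ℝ≥0∞) (hΦ : Measurable Φ) :
    ∫⁻ x in HS, Φ x = ∫⁻ y : Fin 2 → ℝ, ∫⁻ z in Set.Ioi (0:ℝ), Φ (sl y z) := by
  set e := MeasurableEquiv.piFinSuccAbove (fun _ : Fin 3 => ℝ) 2 with he
  have hes : ∀ p : ℝ × (Fin 2 → ℝ), e.symm p = sl p.2 p.1 := by
    rintro ⟨z, y⟩
    rw [he, MeasurableEquiv.piFinSuccAbove_symm_apply]
    simp only [Fin.insertNthEquiv_apply]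
    exact insertNth_eq_sl y z
  have hindm : Measurable (HS.indicator Φ) := hΦ.indicator measurableSet_HS
  have h1 : ∫⁻ x in HS, Φ x = ∫⁻ x, HS.indicator Φ x := (lintegral_indicator measurableSet_HS Φ).symm
  have h2 : ∫⁻ x, HS.indicator Φ x
      = ∫⁻ p : ℝ × (Fin 2 → ℝ), HS.indicator Φ (e.symm p) :=
    (((volume_preserving_piFinSuccAbove (fun _ : Fin 3 => ℝ) 2).symm e).lintegral_comp
      hindm).symm
  have hWm : Measurable fun p : ℝ × (Fin 2 → ℝ) => HS.indicator Φ (e.symm p) :=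
    hindm.comp e.symm.measurable
  have h3 : ∫⁻ p : ℝ × (Fin 2 → ℝ), HS.indicator Φ (e.symm p)
      = ∫⁻ z : ℝ, ∫⁻ y : Fin 2 → ℝ, HS.indicator Φ (e.symm (z, y)) := by
    rw [Measure.volume_eq_prod]
    exact lintegral_prod _ hWm.aemeasurable
  have h4 : ∫⁻ z : ℝ, ∫⁻ y : Fin 2 → ℝ, HS.indicator Φ (e.symm (z, y))
      = ∫⁻ y : Fin 2 → ℝ, ∫⁻ z : ℝ, HS.indicator Φ (e.symm (z, y)) := by
    refine lintegral_lintegral_swap ?_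
    exact (hindm.comp (e.symm.measurable.comp measurable_id)).aemeasurable
  rw [h1, h2, h3, h4]
  refine lintegral_congr fun y => ?_
  have h5 : ∀ z : ℝ, HS.indicator Φ (e.symm (z, y))
      = (Set.Ioi (0:ℝ)).indicator (fun z => Φ (sl y z)) z := by
    intro z
    rw [hes (z, y)]
    by_cases hz : (0:ℝ) < z
    · rw [Set.indicator_of_mem (show sl y z ∈ HS from hz) Φ,
        Set.indicator_of_mem (Set.mem_Ioi.mpr hz) (fun z => Φ (sl y z))]
    · rw [Set.indicator_of_notMem (show sl y z ∉ HS from hz) Φ,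
        Set.indicator_of_notMem (show z ∉ Set.Ioi (0:ℝ) by simpa using hz)
          (fun z => Φ (sl y z))]
  rw [lintegral_congr h5, lintegral_indicator measurableSet_Ioi]

lemma sq_eLpNorm {α : Type*} [MeasurableSpace α] (μ : Measure α) (u : α → ℝ) :
    eLpNorm u 2 μ ^ 2 = ∫⁻ x, ENNReal.ofReal (u x ^ 2) ∂μ := by
  rw [eLpNorm_eq_lintegral_rpow_enorm_toReal (by norm_num) (by norm_num)]
  have htoReal : (2:ℝ≥0∞).toReal = 2 := by norm_num
  rw [htoReal]
  rw [← ENNReal.rpow_natCast _ 2, ← ENNReal.rpow_mul]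
  norm_num
  refine lintegral_congr fun x => ?_
  rw [← ofReal_norm_eq_enorm, ← ENNReal.ofReal_pow (norm_nonneg _),
    Real.norm_eq_abs, sq_abs]

lemma lintegral_abs_mul_le (g u : E → ℝ) (hg : Measurable g) (hu : Measurable u) :
    ∫⁻ x in HS, ENNReal.ofReal |g x * u x|
      ≤ eLpNorm g 2 (volume.restrict HS) * eLpNorm u 2 (volume.restrict HS) := by
  have hconj : Real.HolderConjugate 2 2 := Real.HolderConjugate.two_two
  have hCS := ENNReal.lintegral_mul_le_Lp_mul_Lq (volume.restrict HS) hconj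
    (f := fun x => ‖g x‖ₑ) (g := fun x => ‖u x‖ₑ)
    hg.enorm.aemeasurable hu.enorm.aemeasurable
  have hpt : ∀ x : E, ENNReal.ofReal |g x * u x| = ‖g x‖ₑ * ‖u x‖ₑ := by
    intro x
    rw [← Real.norm_eq_abs, ofReal_norm_eq_enorm, enorm_mul]
  have he : ∀ v : E → ℝ, eLpNorm v 2 (volume.restrict HS)
      = (∫⁻ x in HS, ‖v x‖ₑ ^ (2:ℝ)) ^ (1/(2:ℝ)) := by
    intro v
    rw [eLpNorm_eq_lintegral_rpow_enorm_toReal (by norm_num) (by norm_num)]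
    norm_num
  rw [lintegral_congr hpt, he g, he u]
  exact hCS

lemma exp_half_bound {A : ℝ} (hA : 0 ≤ A) {t : ℝ} (ht : 0 ≤ t) :
    Real.exp (-t) * A ≤ A :=
  mul_le_of_le_one_left hA (Real.exp_le_one_iff.mpr (by linarith))


/-- Trace inequality for conormal spaces: for `|I| = k`,
`|Z^I f|²_{L²(∂Ω)} ≲ ‖∇f‖_{H^k_co} ‖f‖_{H^k_co} + ‖f‖²_{H^k_co}`. -/
theorem conormal_trace_inequality (k : ℕ) :
    ∃ C : ℝ≥0∞, 0 < C ∧ C < ⊤ ∧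
      ∀ f : E → ℝ, ContDiff ℝ ∞ f → ∀ I : Fin k → Fin 3,
        (eLpNorm (fun y : Fin 2 → ℝ => ZIter (List.ofFn I) f (emb y)) 2 volume) ^ 2
          ≤ C * (GradHcoN k f * HcoN k f + (HcoN k f) ^ 2) := by
  have hB : ∀ I : Fin k → Fin 3, ∃ B : ℝ≥0∞, B < ⊤ ∧ ∀ f : E → ℝ, ContDiff ℝ ∞ f →
      eLpNorm (pdv 2 (ZIter (List.ofFn I) f)) 2 (volume.restrict HS)
        ≤ B * HcoN k (pdv 2 f) := by
    intro I
    obtain ⟨B, hB1, hB2⟩ := crep_bound (crep_main (List.ofFn I))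
    refine ⟨B, hB1, fun f hf => ?_⟩
    have := hB2 f hf
    rwa [List.length_ofFn] at this
  choose B hBfin hBle using hB
  refine ⟨∑ I : Fin k → Fin 3, (1 + 2 * B I), ?_, ?_, ?_⟩
  · refine lt_of_lt_of_le (show (0:ℝ≥0∞) < 1 + 2 * B default from
      lt_of_lt_of_le zero_lt_one le_self_add) ?_
    exact Finset.single_le_sum (f := fun I => 1 + 2 * B I) (fun _ _ => zero_le)
      (Finset.mem_univ default)
  · refine ENNReal.sum_lt_top.mpr fun I _ => ?_
    exact ENNReal.add_lt_top.mpr ⟨ENNReal.one_lt_top,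
      ENNReal.mul_lt_top (by simp) (hBfin I)⟩
  · intro f hf I
    set g : E → ℝ := ZIter (List.ofFn I) f with hgdef
    set u : E → ℝ := pdv 2 g with hudef
    have hgsm : ∀ x : E, -1 < x 2 → ContDiffAt ℝ ∞ g x :=
      contDiffAt_ZIter (fun x _ => hf.contDiffAt) _
    have hgm : Measurable g := measurable_ZIter _ f hf.continuous.measurable
    have hum : Measurable u := measurable_pdv 2 g
    set H := HcoN k f with hHdef
    set Gr := GradHcoN k f with hGrdef
    -- pointwise trace bound
    have hpt : ∀ y : Fin 2 → ℝ, ENNReal.ofReal (g (emb y) ^ 2)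
        ≤ ∫⁻ z in Set.Ioi (0:ℝ), ENNReal.ofReal
            (Real.exp (-z) * (g (sl y z) ^ 2 + 2 * |g (sl y z) * u (sl y z)|)) := by
      intro y
      have hslc : Continuous (fun z : ℝ => sl y z) := by
        have : (fun z : ℝ => sl y z) = fun z => emb y + z • (Pi.single 2 1 : E) := by
          funext z; exact sl_eq y z
        rw [this]
        exact continuous_const.add (continuous_id.smul continuous_const)
      have hder : ∀ z : ℝ, 0 ≤ z → HasDerivAt (fun t => g (sl y t)) (u (sl y z)) z :=
        fun z hz => hasDerivAt_slice
          ((hgsm (sl y z) (by rw [sl_two]; linarith)).differentiableAt (by simp))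
      have hm' : Measurable (fun z : ℝ => u (sl y z)) := hum.comp hslc.measurable
      exact oneD hder hm'
    -- the integrand on the half space
    set Φ : E → ℝ≥0∞ := fun x =>
      ENNReal.ofReal (Real.exp (-x 2) * (g x ^ 2 + 2 * |g x * u x|)) with hΦdef
    have hΦm : Measurable Φ := by
      refine ENNReal.measurable_ofReal.comp ?_
      exact ((Real.measurable_exp.comp (measurable_pi_apply 2).neg).mul
        ((hgm.pow measurable_const).add (measurable_const.mul ((hgm.mul hum).abs))))
    have h1 : eLpNorm (fun y : Fin 2 → ℝ => g (emb y)) 2 volume ^ 2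
        = ∫⁻ y : Fin 2 → ℝ, ENNReal.ofReal (g (emb y) ^ 2) := sq_eLpNorm volume _
    have h2 : ∫⁻ y : Fin 2 → ℝ, ENNReal.ofReal (g (emb y) ^ 2)
        ≤ ∫⁻ y : Fin 2 → ℝ, ∫⁻ z in Set.Ioi (0:ℝ), Φ (sl y z) :=
      lintegral_mono fun y => hpt y
    have h3 : ∫⁻ y : Fin 2 → ℝ, ∫⁻ z in Set.Ioi (0:ℝ), Φ (sl y z) = ∫⁻ x in HS, Φ x :=
      (lintegral_HS_eq Φ hΦm).symm
    have h4 : ∫⁻ x in HS, Φ x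
        ≤ ∫⁻ x in HS, (ENNReal.ofReal (g x ^ 2) + 2 * ENNReal.ofReal |g x * u x|) := by
      refine lintegral_mono_ae ((ae_restrict_iff' measurableSet_HS).2
        (Filter.Eventually.of_forall fun x hx => ?_))
      have hx2 : (0:ℝ) ≤ x 2 := le_of_lt hx
      calc Φ x ≤ ENNReal.ofReal (g x ^ 2 + 2 * |g x * u x|) := by
            refine ENNReal.ofReal_le_ofReal (exp_half_bound (by positivity) hx2)
        _ = ENNReal.ofReal (g x ^ 2) + ENNReal.ofReal (2 * |g x * u x|) :=
            ENNReal.ofReal_add (sq_nonneg _) (by positivity)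
        _ = ENNReal.ofReal (g x ^ 2) + 2 * ENNReal.ofReal |g x * u x| := by
            rw [ENNReal.ofReal_mul (by norm_num)]
            norm_num
    have h5 : ∫⁻ x in HS, (ENNReal.ofReal (g x ^ 2) + 2 * ENNReal.ofReal |g x * u x|)
        = (∫⁻ x in HS, ENNReal.ofReal (g x ^ 2))
          + 2 * ∫⁻ x in HS, ENNReal.ofReal |g x * u x| := by
      rw [lintegral_add_left (by
        exact ENNReal.measurable_ofReal.comp (hgm.pow measurable_const)),
        lintegral_const_mul 2 (by
        exact ENNReal.measurable_ofReal.comp ((hgm.mul hum).abs))]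
    have hgH : eLpNorm g 2 (volume.restrict HS) ≤ H := by
      rw [hHdef]
      exact le_HcoN f (by rw [List.length_ofFn])
    have hA : ∫⁻ x in HS, ENNReal.ofReal (g x ^ 2) ≤ H ^ 2 := by
      rw [← sq_eLpNorm]
      exact pow_le_pow_left' hgH 2
    have hCS : ∫⁻ x in HS, ENNReal.ofReal |g x * u x| ≤ H * (B I * Gr) := by
      refine le_trans (lintegral_abs_mul_le g u hgm hum) ?_
      refine mul_le_mul' hgH ?_
      refine le_trans (hBle I f hf) ?_
      exact mul_le_mul_right (HcoN_pdv2_le_Grad k f) _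
    -- combine
    have hchain : eLpNorm (fun y : Fin 2 → ℝ => g (emb y)) 2 volume ^ 2
        ≤ H ^ 2 + 2 * (H * (B I * Gr)) := by
      rw [h1]
      refine le_trans h2 (le_trans (le_of_eq h3) (le_trans h4 (le_of_eq h5 |>.trans ?_)))
      exact add_le_add hA (mul_le_mul_right hCS 2)
    refine le_trans hchain ?_
    have hterm : H ^ 2 + 2 * (H * (B I * Gr)) ≤ (1 + 2 * B I) * (Gr * H + H ^ 2) := by
      rw [add_mul, one_mul]
      refine add_le_add ?_ ?_
      · exact le_add_of_nonneg_left (zero_le)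
      · calc 2 * (H * (B I * Gr)) = 2 * B I * (Gr * H) := by ring
          _ ≤ 2 * B I * (Gr * H + H ^ 2) := mul_le_mul_right le_self_add _
    refine le_trans hterm ?_
    exact mul_le_mul_left (Finset.single_le_sum (f := fun I' => 1 + 2 * B I')
      (fun _ _ => zero_le) (Finset.mem_univ I)) _
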